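/- Let n ≥ 1, t ≥ 0, and let C be any 2^n × 2^n complex matrix. Then ⟨|C|, Ψ_t^{⊗n}(|C|)⟩ + ⟨|C†|, Ψ_t^{⊗n}(|C†|)⟩ ≥ Re⟨C, Ψ_t^{⊗n}(C)⟩ + Re⟨C†, Ψ_t^{⊗n}(C†)⟩, where |C| = √(C†C) and |C†| = √(CC†). -/

import Mathlib

noncomputable section

open scoped Matrix ComplexOrder

/-- The algebra of operators on `(ℂ²)^{⊗ n}`, as `2^n × 2^n` matrices indexed by `Fin n → Fin 2`. -/
abbrev Mq (n : ℕ) := Matrix (Fin n → Fin 2) (Fin n → Fin 2) ℂ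

/-- Normalized trace `τ(X) = 2^{-n} tr X`. -/
def qTau {n : ℕ} (X : Mq n) : ℂ := ((2 : ℂ) ^ n)⁻¹ * X.trace

/-- Real part of the normalized trace. -/
def qTauR {n : ℕ} (X : Mq n) : ℝ := (qTau X).re

/-- Normalized Hilbert–Schmidt inner product `⟨X, Y⟩ = τ(X† Y)`. -/
def qInner {n : ℕ} (X Y : Mq n) : ℂ := qTau (Xᴴ * Y)

/-- `|X| = √(X† X)`. -/
def mAbs {n : ℕ} (X : Mq n) : Mq n :=
  (Matrix.posSemidef_conjTranspose_mul_self X).1.eigenvectorUnitary.1 *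
    Matrix.diagonal (((↑) : ℝ → ℂ) ∘ Real.sqrt ∘
      (Matrix.posSemidef_conjTranspose_mul_self X).1.eigenvalues) *
    (star (Matrix.posSemidef_conjTranspose_mul_self X).1.eigenvectorUnitary : Mq n)

/-- The entropy `Ent(X) = τ(X ln X) − τ(X) ln τ(X)` (with the convention `0 ln 0 = 0`),
for positive semidefinite `X`, via the continuous functional calculus. -/
def mEnt {n : ℕ} (X : Mq n) : ℝ :=
  qTauR (cfc (fun x : ℝ => x * Real.log x) X) - qTauR X * Real.log (qTauR X)

/-- Real powers `X^p` of a positive semidefinite matrix, by functional calculus on the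
support (`0 ^ p = 0` for `p ≠ 0`). -/
def mPow {n : ℕ} (X : Mq n) (p : ℝ) : Mq n := cfc (fun x : ℝ => x ^ p) X

/-- Normalized Schatten `p`-norm `‖X‖_p = (τ(|X|^p))^{1/p}`. -/
def schatten {n : ℕ} (p : ℝ) (X : Mq n) : ℝ := qTauR (mPow (mAbs X) p) ^ (1 / p)

/-- Conditional expectation onto the `i`-th qubit being maximally mixed:
`E_i = I^{⊗(i-1)} ⊗ (τ(·) I) ⊗ I^{⊗(n-i)}`. -/
def condExpQ {n : ℕ} (i : Fin n) (X : Mq n) : Mq n :=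
  Matrix.of fun a b =>
    if a i = b i then
      (2 : ℂ)⁻¹ * ∑ c : Fin 2, X (Function.update a i c) (Function.update b i c)
    else 0

/-- The Lindblad generator `K_n = Σ_i L̂_i`, where `L̂_i` acts as `L(X) = X − τ(X) I`
on the `i`-th tensor factor. -/
def Kq (n : ℕ) (X : Mq n) : Mq n := ∑ i : Fin n, (X - condExpQ i X)

/-- The depolarizing channel on the `i`-th qubit:
`e^{-t} X + (1 - e^{-t}) τ_i(X) ⊗ I_i`. -/
def depolStep {n : ℕ} (t : ℝ) (i : Fin n) (X : Mq n) : Mq n :=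
  (Real.exp (-t) : ℂ) • X + ((1 : ℂ) - (Real.exp (-t) : ℂ)) • condExpQ i X

/-- `Ψ_t^{⊗ n}`: the `n`-fold tensor power of the qubit depolarizing channel, i.e. the
composition over all qubits `i` of the depolarizing channel acting on the `i`-th factor. -/
def psiDep {n : ℕ} (t : ℝ) (X : Mq n) : Mq n :=
  (List.finRange n).foldr (fun i Y => depolStep t i Y) X

/-- The binary entropy function `h(s) = −s ln s − (1−s) ln(1−s)`. -/
def binEnt (s : ℝ) : ℝ := -(s * Real.log s) - (1 - s) * Real.log (1 - s)

/-- `h⁻¹ : [0, ln 2] → [0, 1/2]`, the inverse of the restriction of the binary entropy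
function to `[0, 1/2]`. -/
def binEntInv (y : ℝ) : ℝ := Function.invFunOn binEnt (Set.Icc 0 (1 / 2)) y

/-- `φ(ξ) = 1/2 − √(h⁻¹(ln 2 − ξ)(1 − h⁻¹(ln 2 − ξ)))`. -/
def phiF (ξ : ℝ) : ℝ :=
  1 / 2 - Real.sqrt (binEntInv (Real.log 2 - ξ) * (1 - binEntInv (Real.log 2 - ξ)))

/-- `α(ξ) = φ(ξ)/ξ` for `ξ ∈ (0, ln 2]`, with `α(0) = 1/2` by continuous extension. -/
def alphaF (ξ : ℝ) : ℝ := if ξ = 0 then 1 / 2 else ξ⁻¹ * phiF ξ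

namespace PsiAuxP

open Matrix

variable {m : Type*} [Fintype m] [DecidableEq m]

lemma trace_mul_re_nonneg {A B : Matrix m m ℂ} (hA : A.PosSemidef) (hB : B.PosSemidef) :
    0 ≤ (Matrix.trace (A * B)).re := by
  open scoped MatrixOrder in obtain ⟨L, hL⟩ := CStarAlgebra.nonneg_iff_eq_star_mul_self.mp hA.nonneg
  open scoped MatrixOrder in obtain ⟨M, hM⟩ := CStarAlgebra.nonneg_iff_eq_star_mul_self.mp hB.nonneg
  simp only [Matrix.star_eq_conjTranspose] at hL hM
  have key : Matrix.trace (A * B) = Matrix.trace ((L * Mᴴ)ᴴ * (L * Mᴴ)) := by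
    rw [hL, hM, Matrix.conjTranspose_mul, Matrix.conjTranspose_conjTranspose]
    conv_rhs => rw [show M * Lᴴ * (L * Mᴴ) = (M * (Lᴴ * L)) * Mᴴ from by noncomm_ring]
    rw [Matrix.trace_mul_comm (M * (Lᴴ * L)) Mᴴ, Matrix.trace_mul_comm (Lᴴ * L) (Mᴴ * M)]
    congr 1
    noncomm_ring
  rw [key]
  set Nm : Matrix m m ℂ := L * Mᴴ with hNm
  clear_value Nm
  rw [Matrix.trace]
  simp only [Matrix.diag_apply, Matrix.mul_apply, Matrix.conjTranspose_apply, Complex.re_sum]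
  refine Finset.sum_nonneg fun j _ => Finset.sum_nonneg fun i _ => ?_
  have : (star (Nm i j) * Nm i j).re = Complex.normSq (Nm i j) := by
    simp [Complex.mul_re, Complex.normSq_apply]
  rw [this]
  exact Complex.normSq_nonneg _

lemma exists_posPart (H : Matrix m m ℂ) (hH : H.IsHermitian) :
    ∃ P N : Matrix m m ℂ, P.PosSemidef ∧ N.PosSemidef ∧ H = P - N ∧
      (P + N) * (P + N) = H * H := by
  set V : Matrix m m ℂ := (hH.eigenvectorUnitary : Matrix m m ℂ) with hV
  have hV1 : star V * V = 1 := hH.eigenvectorUnitary.2.1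
  have hV2 : V * star V = 1 := hH.eigenvectorUnitary.2.2
  set lam : m → ℝ := hH.eigenvalues with hlam
  set dP : m → ℂ := fun i => ((max (lam i) 0 : ℝ) : ℂ) with hdP
  set dN : m → ℂ := fun i => ((max (-lam i) 0 : ℝ) : ℂ) with hdN
  have hPSD : ∀ d : m → ℝ, (∀ i, 0 ≤ d i) →
      (V * diagonal (fun i => ((d i : ℝ) : ℂ)) * star V).PosSemidef := by
    intro d hd
    rw [Matrix.star_eq_conjTranspose]
    exact (Matrix.PosSemidef.diagonal fun i => Complex.zero_le_real.mpr (hd i)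
      ).mul_mul_conjTranspose_same V
  refine ⟨V * diagonal dP * star V, V * diagonal dN * star V,
    hPSD _ fun i => le_max_right _ _, hPSD _ fun i => le_max_right _ _, ?_, ?_⟩
  · rw [← Matrix.sub_mul, ← Matrix.mul_sub]
    have hdiag : diagonal dP - diagonal dN = diagonal (fun i => ((lam i : ℝ) : ℂ)) := by
      ext i j
      rcases eq_or_ne i j with rfl | hij
      · simp [hdP, hdN, ← Complex.ofReal_sub, max_zero_sub_max_neg_zero_eq_self]
      · simp [Matrix.diagonal_apply_ne _ hij]
    rw [hdiag]
    exact hH.spectral_theorem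
  · rw [← Matrix.add_mul, ← Matrix.mul_add, Matrix.diagonal_add]
    have step : ∀ (d : m → ℂ),
        (V * diagonal d * star V) * (V * diagonal d * star V)
          = V * diagonal (fun i => d i * d i) * star V := by
      intro d
      rw [show V * diagonal d * star V * (V * diagonal d * star V)
          = V * diagonal d * (star V * V) * (diagonal d * star V) from by noncomm_ring,
        hV1, Matrix.mul_one,
        show V * diagonal d * (diagonal d * star V)
          = V * (diagonal d * diagonal d) * star V from by noncomm_ring,
        Matrix.diagonal_mul_diagonal]
    rw [step]
    have hHH : H * H
        = V * diagonal (fun i => ((lam i : ℝ) : ℂ) * ((lam i : ℝ) : ℂ)) * star V := by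
      conv_lhs => rw [hH.spectral_theorem]
      exact step (RCLike.ofReal ∘ lam)
    rw [hHH]
    have hfun : (fun i => (dP i + dN i) * (dP i + dN i))
        = fun i => ((lam i : ℝ) : ℂ) * ((lam i : ℝ) : ℂ) := by
      funext i
      simp only [hdP, hdN, ← Complex.ofReal_add, ← Complex.ofReal_mul]
      norm_cast
      rcases le_total (lam i) 0 with h | h
      · rw [max_eq_right h, max_eq_left (neg_nonneg.mpr h)]; ring
      · rw [max_eq_left h, max_eq_right (neg_nonpos.mpr h)]; ring
    rw [hfun]

lemma sandwich (H S K : Matrix m m ℂ) (hH : H.IsHermitian) (hS : S.PosSemidef)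
    (hsq : S * S = H * H) :
    (Matrix.trace (H * K * H * Kᴴ)).re ≤ (Matrix.trace (S * K * S * Kᴴ)).re := by
  obtain ⟨P, N, hP, hN, hHPN, hsq2⟩ := exists_posPart H hH
  have hSeq : S = P + N :=
    open scoped MatrixOrder in
    (CFC.sqrt_unique (a := S * S) rfl hS.nonneg).symm.trans
      (CFC.sqrt_unique (hsq2.trans hsq.symm) (hP.add hN).nonneg)
  have e1 : H * K * H * Kᴴ
      = (P*K*(P*Kᴴ) + N*K*(N*Kᴴ)) - (P*K*(N*Kᴴ) + N*K*(P*Kᴴ)) := by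
    rw [hHPN]; noncomm_ring
  have e2 : S * K * S * Kᴴ
      = (P*K*(P*Kᴴ) + N*K*(N*Kᴴ)) + (P*K*(N*Kᴴ) + N*K*(P*Kᴴ)) := by
    rw [hSeq]; noncomm_ring
  have h1 : 0 ≤ (Matrix.trace (P*K*(N*Kᴴ))).re := by
    have := trace_mul_re_nonneg hP (hN.mul_mul_conjTranspose_same K)
    simpa [Matrix.mul_assoc] using this
  have h2 : 0 ≤ (Matrix.trace (N*K*(P*Kᴴ))).re := by
    have := trace_mul_re_nonneg hN (hP.mul_mul_conjTranspose_same K)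
    simpa [Matrix.mul_assoc] using this
  rw [e1, e2]
  simp only [Matrix.trace_sub, Matrix.trace_add, Complex.sub_re, Complex.add_re]
  linarith

lemma posSemidef_blockDiag {A D : Matrix m m ℂ} (hA : A.PosSemidef) (hD : D.PosSemidef) :
    (Matrix.fromBlocks A 0 0 D).PosSemidef := by
  rw [Matrix.posSemidef_iff_dotProduct_mulVec]
  constructor
  · show (Matrix.fromBlocks A 0 0 D)ᴴ = _
    rw [Matrix.fromBlocks_conjTranspose]
    simp [hA.1.eq, hD.1.eq]
  · intro x
    have key : dotProduct (star x) ((Matrix.fromBlocks A 0 0 D) *ᵥ x)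
        = dotProduct (star (x ∘ Sum.inl)) (A *ᵥ (x ∘ Sum.inl))
          + dotProduct (star (x ∘ Sum.inr)) (D *ᵥ (x ∘ Sum.inr)) := by
      simp [dotProduct, Fintype.sum_sum_type, Matrix.fromBlocks_mulVec,
        Function.comp]
    rw [key]
    exact add_nonneg (hA.dotProduct_mulVec_nonneg _) (hD.dotProduct_mulVec_nonneg _)

lemma mAbs_psd_sq {n : ℕ} (X : Mq n) : (mAbs X).PosSemidef ∧ mAbs X * mAbs X = Xᴴ * X := by
  have hH := (Matrix.posSemidef_conjTranspose_mul_self X).1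
  set V : Mq n := (hH.eigenvectorUnitary : Mq n) with hV
  have hV1 : star V * V = 1 := hH.eigenvectorUnitary.2.1
  have e : mAbs X = V * diagonal (((↑) : ℝ → ℂ) ∘ Real.sqrt ∘ hH.eigenvalues) * star V := rfl
  rw [e]
  constructor
  · rw [Matrix.star_eq_conjTranspose]
    exact (Matrix.PosSemidef.diagonal fun i => Complex.zero_le_real.mpr (Real.sqrt_nonneg _)
      ).mul_mul_conjTranspose_same V
  · set D := diagonal (((↑) : ℝ → ℂ) ∘ Real.sqrt ∘ hH.eigenvalues)
    rw [show V * D * star V * (V * D * star V) = V * D * (star V * V) * (D * star V) from by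
      noncomm_ring, hV1, Matrix.mul_one,
      show V * D * (D * star V) = V * (D * D) * star V from by noncomm_ring,
      Matrix.diagonal_mul_diagonal]
    have hs := hH.spectral_theorem
    rw [Unitary.conjStarAlgAut_apply] at hs
    conv_rhs => rw [hs]
    congr 2
    congr 1
    funext i
    have h0 := (Matrix.posSemidef_conjTranspose_mul_self X).eigenvalues_nonneg i
    simp only [Function.comp_apply]
    rw [← Complex.ofReal_mul, Real.mul_self_sqrt h0]
    rfl

lemma block_trace (A B C D : Matrix m m ℂ) :
    Matrix.trace (Matrix.fromBlocks A B C D) = Matrix.trace A + Matrix.trace D := by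
  simp [Matrix.trace, Matrix.diag, Fintype.sum_sum_type]

lemma kraus_ineq (C K P Q : Matrix m m ℂ) (hP : P.PosSemidef) (hQ : Q.PosSemidef)
    (hP2 : P * P = Cᴴ * C) (hQ2 : Q * Q = C * Cᴴ) :
    (Matrix.trace (Cᴴ * (K * C * Kᴴ))).re + (Matrix.trace (C * (K * Cᴴ * Kᴴ))).re ≤
      (Matrix.trace (P * (K * P * Kᴴ))).re + (Matrix.trace (Q * (K * Q * Kᴴ))).re := by
  have hH : (Matrix.fromBlocks 0 C Cᴴ 0 : Matrix (m ⊕ m) (m ⊕ m) ℂ).IsHermitian := by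
    show _ᴴ = _
    rw [Matrix.fromBlocks_conjTranspose]
    simp
  have hS : (Matrix.fromBlocks Q 0 0 P : Matrix (m ⊕ m) (m ⊕ m) ℂ).PosSemidef :=
    posSemidef_blockDiag hQ hP
  have hsq : (Matrix.fromBlocks Q 0 0 P : Matrix (m ⊕ m) (m ⊕ m) ℂ) * Matrix.fromBlocks Q 0 0 P
      = Matrix.fromBlocks 0 C Cᴴ 0 * Matrix.fromBlocks 0 C Cᴴ 0 := by
    simp [Matrix.fromBlocks_multiply, hP2, hQ2]
  have main := sandwich (Matrix.fromBlocks 0 C Cᴴ 0) (Matrix.fromBlocks Q 0 0 P)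
    (Matrix.fromBlocks K 0 0 K) hH hS hsq
  have lhs_eq : Matrix.trace ((Matrix.fromBlocks 0 C Cᴴ 0) * (Matrix.fromBlocks K 0 0 K) *
      (Matrix.fromBlocks 0 C Cᴴ 0) * (Matrix.fromBlocks K 0 0 K)ᴴ)
      = Matrix.trace (C * (K * Cᴴ * Kᴴ)) + Matrix.trace (Cᴴ * (K * C * Kᴴ)) := by
    rw [Matrix.fromBlocks_conjTranspose]
    simp only [Matrix.fromBlocks_multiply, Matrix.conjTranspose_zero]
    simp [block_trace, Matrix.mul_assoc]
  have rhs_eq : Matrix.trace ((Matrix.fromBlocks Q 0 0 P) * (Matrix.fromBlocks K 0 0 K) *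
      (Matrix.fromBlocks Q 0 0 P) * (Matrix.fromBlocks K 0 0 K)ᴴ)
      = Matrix.trace (Q * (K * Q * Kᴴ)) + Matrix.trace (P * (K * P * Kᴴ)) := by
    rw [Matrix.fromBlocks_conjTranspose]
    simp only [Matrix.fromBlocks_multiply, Matrix.conjTranspose_zero]
    simp [block_trace, Matrix.mul_assoc]
  rw [lhs_eq, rhs_eq] at main
  simp only [Complex.add_re] at main
  linarith


open Matrix

def KrausRep {n : ℕ} (Φ : Mq n → Mq n) : Prop :=
  ∃ (N : ℕ) (p : Fin N → ℝ) (K : Fin N → Mq n),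
    (∀ k, 0 ≤ p k) ∧ ∀ X, Φ X = ∑ k, ((p k : ℝ) : ℂ) • (K k * X * (K k)ᴴ)

lemma krausRep_id {n : ℕ} : KrausRep (fun X : Mq n => X) := by
  refine ⟨1, fun _ => 1, fun _ => 1, fun _ => zero_le_one, fun X => ?_⟩
  simp

def eK {n : ℕ} (i : Fin n) (c d : Fin 2) : Mq n :=
  Matrix.of fun a b =>
    (if a i = d then (1 : ℂ) else 0) * (if b = Function.update a i c then 1 else 0)

lemma eK_conj_apply {n : ℕ} (i : Fin n) (c d : Fin 2) (X : Mq n)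
    (a b : Fin n → Fin 2) :
    (eK i c d * X * (eK i c d)ᴴ) a b
      = (if a i = d then (1:ℂ) else 0) * (if b i = d then 1 else 0)
        * X (Function.update a i c) (Function.update b i c) := by
  simp only [Matrix.mul_apply, Matrix.conjTranspose_apply, eK, Matrix.of_apply,
    star_mul', star_one, star_zero, ite_mul, mul_ite, mul_one, mul_zero,
    zero_mul, one_mul]
  by_cases h1 : a i = d <;> by_cases h2 : b i = d <;>
    simp [h1, h2, apply_ite (star : ℂ → ℂ), Finset.sum_ite_eq']

lemma krausRep_condExp {n : ℕ} (i : Fin n) : KrausRep (fun X : Mq n => condExpQ i X) := by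
  refine ⟨2 * 2, fun _ => (1/2 : ℝ),
    fun k => eK i (finProdFinEquiv.symm k).1 (finProdFinEquiv.symm k).2,
    fun _ => by norm_num, fun X => ?_⟩
  have hre := Equiv.sum_comp (finProdFinEquiv (m := 2) (n := 2)).symm
    (fun cd : Fin 2 × Fin 2 => ((1/2 : ℝ) : ℂ) • (eK i cd.1 cd.2 * X * (eK i cd.1 cd.2)ᴴ))
  refine Eq.trans ?_ hre.symm
  ext a b
  simp only [Matrix.sum_apply, Matrix.smul_apply, eK_conj_apply, Fintype.sum_prod_type,
    condExpQ, Matrix.of_apply, smul_eq_mul]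
  by_cases h : a i = b i
  · simp only [if_pos h, ← h]
    rw [Finset.mul_sum]
    refine Finset.sum_congr rfl fun c _ => ?_
    rw [Finset.sum_eq_single (a i)]
    · norm_num
    · intro d _ hd; simp [Ne.symm hd]
    · simp
  · simp only [if_neg h]
    refine (Finset.sum_eq_zero fun c _ => Finset.sum_eq_zero fun d _ => ?_).symm
    rcases eq_or_ne (a i) d with rfl | hd
    · simp [Ne.symm h]
    · simp [hd]

lemma krausRep_comp {n : ℕ} {Φ Ψ : Mq n → Mq n} (hΦ : KrausRep Φ) (hΨ : KrausRep Ψ) :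
    KrausRep (fun X => Φ (Ψ X)) := by
  obtain ⟨N, p, K, hp, hK⟩ := hΦ
  obtain ⟨M, q, L, hq, hL⟩ := hΨ
  refine ⟨N * M,
    fun k => p (finProdFinEquiv.symm k).1 * q (finProdFinEquiv.symm k).2,
    fun k => K (finProdFinEquiv.symm k).1 * L (finProdFinEquiv.symm k).2,
    fun k => mul_nonneg (hp _) (hq _), fun X => ?_⟩
  have hre := Equiv.sum_comp (finProdFinEquiv (m := N) (n := M)).symm
    (fun kl : Fin N × Fin M => ((p kl.1 * q kl.2 : ℝ) : ℂ) •
      ((K kl.1 * L kl.2) * X * (K kl.1 * L kl.2)ᴴ))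
  refine Eq.trans ?_ hre.symm
  show Φ (Ψ X) = _
  rw [hK (Ψ X), hL X, Fintype.sum_prod_type]
  refine Finset.sum_congr rfl fun k _ => ?_
  rw [Matrix.mul_sum, Matrix.sum_mul, Finset.smul_sum]
  refine Finset.sum_congr rfl fun l _ => ?_
  rw [Matrix.mul_smul, Matrix.smul_mul, smul_smul, ← Complex.ofReal_mul]
  congr 1
  rw [Matrix.conjTranspose_mul]
  noncomm_ring

lemma krausRep_combo {n : ℕ} {Φ Ψ : Mq n → Mq n} (a b : ℝ) (ha : 0 ≤ a) (hb : 0 ≤ b)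
    (hΦ : KrausRep Φ) (hΨ : KrausRep Ψ) :
    KrausRep (fun X => (a : ℂ) • Φ X + (b : ℂ) • Ψ X) := by
  obtain ⟨N, p, K, hp, hK⟩ := hΦ
  obtain ⟨M, q, L, hq, hL⟩ := hΨ
  refine ⟨N + M,
    fun k => Sum.elim (fun k1 => a * p k1) (fun k2 => b * q k2) (finSumFinEquiv.symm k),
    fun k => Sum.elim K L (finSumFinEquiv.symm k),
    fun k => ?_, fun X => ?_⟩
  · rcases hk : finSumFinEquiv.symm k with k1 | k2 <;> simp only [hk, Sum.elim_inl, Sum.elim_inr]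
    · exact mul_nonneg ha (hp k1)
    · exact mul_nonneg hb (hq k2)
  · have hre := Equiv.sum_comp (finSumFinEquiv (m := N) (n := M)).symm
      (fun s : Fin N ⊕ Fin M => ((Sum.elim (fun k1 => a * p k1) (fun k2 => b * q k2) s : ℝ) : ℂ) •
        ((Sum.elim K L s) * X * (Sum.elim K L s)ᴴ))
    refine Eq.trans ?_ hre.symm
    rw [Fintype.sum_sum_type]
    simp only [Sum.elim_inl, Sum.elim_inr]
    rw [hK X, hL X, Finset.smul_sum, Finset.smul_sum]
    congr 1 <;> refine Finset.sum_congr rfl fun k _ => ?_ <;>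
      rw [smul_smul, ← Complex.ofReal_mul]

lemma krausRep_foldr {n : ℕ} (t : ℝ) (ht : 0 ≤ t) (l : List (Fin n)) :
    KrausRep (fun X : Mq n => l.foldr (fun i Y => depolStep t i Y) X) := by
  induction l with
  | nil => simpa using krausRep_id
  | cons i l ih =>
    have hcomb := krausRep_combo (Real.exp (-t)) (1 - Real.exp (-t))
      (Real.exp_nonneg _)
      (by
        have : Real.exp (-t) ≤ 1 := by
          rw [← Real.exp_zero]
          exact Real.exp_le_exp.mpr (by linarith)
        linarith)
      ih (krausRep_comp (krausRep_condExp i) ih)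
    have : (fun X : Mq n => (i :: l).foldr (fun i Y => depolStep t i Y) X)
        = fun X => ((Real.exp (-t) : ℝ) : ℂ) • (l.foldr (fun i Y => depolStep t i Y) X)
            + ((1 - Real.exp (-t) : ℝ) : ℂ) •
              condExpQ i (l.foldr (fun i Y => depolStep t i Y) X) := by
      funext X
      simp only [List.foldr_cons, depolStep]
      push_cast
      ring_nf
    rw [this]
    exact hcomb

lemma krausRep_psiDep {n : ℕ} (t : ℝ) (ht : 0 ≤ t) :
    KrausRep (fun X : Mq n => psiDep t X) :=
  krausRep_foldr t ht _

end PsiAuxP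

/-- For the depolarizing semigroup:
`⟨|C|, Ψ_t^{⊗n}(|C|)⟩ + ⟨|C†|, Ψ_t^{⊗n}(|C†|)⟩ ≥ Re⟨C, Ψ_t^{⊗n}(C)⟩ + Re⟨C†, Ψ_t^{⊗n}(C†)⟩`. -/
theorem psi_inner_abs (n : ℕ) (hn : 1 ≤ n) (t : ℝ) (ht : 0 ≤ t) (C : Mq n) :
    (qInner C (psiDep t C)).re + (qInner Cᴴ (psiDep t Cᴴ)).re ≤
      (qInner (mAbs C) (psiDep t (mAbs C))).re +
        (qInner (mAbs Cᴴ) (psiDep t (mAbs Cᴴ))).re := by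
  classical
  obtain ⟨N, p, K, hp, hrep0⟩ := PsiAuxP.krausRep_psiDep (n := n) t ht
  have hrep : ∀ X : Mq n, psiDep t X = ∑ k, ((p k : ℝ) : ℂ) • (K k * X * (K k)ᴴ) := hrep0
  have inner_eval : ∀ A : Mq n, (qInner A (psiDep t A)).re
      = ((2:ℝ)^n)⁻¹ * ∑ k, p k * (Matrix.trace (Aᴴ * (K k * A * (K k)ᴴ))).re := by
    intro A
    simp only [qInner, qTau]
    rw [hrep A, Matrix.mul_sum]
    simp only [Matrix.mul_smul, Matrix.trace_sum, Matrix.trace_smul, smul_eq_mul]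
    rw [show ((2:ℂ)^n)⁻¹ = ((((2:ℝ)^n)⁻¹ : ℝ) : ℂ) by push_cast; ring]
    rw [Complex.re_ofReal_mul, Complex.re_sum]
    congr 1
    exact Finset.sum_congr rfl fun k _ => Complex.re_ofReal_mul _ _
  have hP : (mAbs C).PosSemidef := (PsiAuxP.mAbs_psd_sq C).1
  have hQ : (mAbs Cᴴ).PosSemidef := (PsiAuxP.mAbs_psd_sq Cᴴ).1
  have hP2 : mAbs C * mAbs C = Cᴴ * C := (PsiAuxP.mAbs_psd_sq C).2
  have hQ2 : mAbs Cᴴ * mAbs Cᴴ = C * Cᴴ :=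
    calc mAbs Cᴴ * mAbs Cᴴ = Cᴴᴴ * Cᴴ :=
          (PsiAuxP.mAbs_psd_sq Cᴴ).2
      _ = C * Cᴴ := by rw [Matrix.conjTranspose_conjTranspose]
  rw [inner_eval C, inner_eval Cᴴ, inner_eval (mAbs C), inner_eval (mAbs Cᴴ),
    ← mul_add, ← mul_add, ← Finset.sum_add_distrib, ← Finset.sum_add_distrib]
  refine mul_le_mul_of_nonneg_left (Finset.sum_le_sum fun k _ => ?_) (by positivity)
  rw [← mul_add, ← mul_add]
  refine mul_le_mul_of_nonneg_left ?_ (hp k)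
  have base := PsiAuxP.kraus_ineq C (K k) (mAbs C) (mAbs Cᴴ) hP hQ hP2 hQ2
  rw [Matrix.conjTranspose_conjTranspose, hP.isHermitian.eq, hQ.isHermitian.eq]
  exact base

end
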